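/- For a Bell-diagonal two-qubit state ρ_λ with eigenvalues λ₁ ≥ λ₂ ≥ λ₃ ≥ λ₄, the concurrence equals max{0, 2λ₁ − 1}. -/

import Mathlib

open Matrix Kronecker Complex Real ComplexOrder

/-- 2×2 complex matrices (one qubit). -/
abbrev M2 := Matrix (Fin 2) (Fin 2) ℂ
/-- 4×4 complex matrices (two qubits), indexed by `Fin 2 × Fin 2`. -/
abbrev M4 := Matrix (Fin 2 × Fin 2) (Fin 2 × Fin 2) ℂ

noncomputable def σx : M2 := !![0, 1; 1, 0]
noncomputable def σy : M2 := !![0, -Complex.I; Complex.I, 0]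
noncomputable def σz : M2 := !![1, 0; 0, -1]

/-- A ±1-valued qubit observable: Hermitian involution. -/
def IsObs (A : M2) : Prop := A.IsHermitian ∧ A * A = 1

/-- A two-qubit density operator. -/
def IsState (ρ : M4) : Prop := ρ.PosSemidef ∧ ρ.trace = 1

/-- The α-CHSH Bell operator. -/
noncomputable def Sop (α : ℝ) (A0 A1 B0 B1 : M2) : M4 :=
  (α : ℂ) • (A0 ⊗ₖ B0 + A0 ⊗ₖ B1) + A1 ⊗ₖ B0 - A1 ⊗ₖ B1

/-- The α-CHSH Bell value of a state with given observables. -/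
noncomputable def BellValue (ρ : M4) (α : ℝ) (A0 A1 B0 B1 : M2) : ℂ :=
  (ρ * Sop α A0 A1 B0 B1).trace

/-- Computational basis vectors of ℂ²⊗ℂ². -/
def ket (i j : Fin 2) : Fin 2 × Fin 2 → ℂ := fun p => if p = (i, j) then 1 else 0

noncomputable def PhiP : Fin 2 × Fin 2 → ℂ := ((Real.sqrt 2 : ℂ))⁻¹ • (ket 0 0 + ket 1 1)
noncomputable def PhiM : Fin 2 × Fin 2 → ℂ := ((Real.sqrt 2 : ℂ))⁻¹ • (ket 0 0 - ket 1 1)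
noncomputable def PsiP : Fin 2 × Fin 2 → ℂ := ((Real.sqrt 2 : ℂ))⁻¹ • (ket 0 1 + ket 1 0)
noncomputable def PsiM : Fin 2 × Fin 2 → ℂ := ((Real.sqrt 2 : ℂ))⁻¹ • (ket 0 1 - ket 1 0)

/-- Rank-one projector |v⟩⟨v|. -/
noncomputable def proj (v : Fin 2 × Fin 2 → ℂ) : M4 := Matrix.vecMulVec v (star v)

/-- Bell-diagonal two-qubit state. -/
noncomputable def BellDiag (l1 l2 l3 l4 : ℝ) : M4 :=
  (l1 : ℂ) • proj PhiP + (l2 : ℂ) • proj PhiM + (l3 : ℂ) • proj PsiP + (l4 : ℂ) • proj PsiM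

/-- The positive semidefinite square root of a positive semidefinite matrix
(Mathlib's former `Matrix.PosSemidef.sqrt`, removed upstream; restated with its old definition). -/
noncomputable def Matrix.PosSemidef.sqrt {n 𝕜 : Type*} [Fintype n] [RCLike 𝕜] [DecidableEq n]
    {A : Matrix n n 𝕜} (hA : A.PosSemidef) : Matrix n n 𝕜 :=
  hA.1.eigenvectorUnitary.1 * diagonal ((↑) ∘ (√·) ∘ hA.1.eigenvalues) *
  (star hA.1.eigenvectorUnitary : Matrix n n 𝕜)

noncomputable def YY : M4 := σy ⊗ₖ σy

attribute [local instance] Classical.propDecidable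

/-- Concurrence of a two-qubit state: `max {0, μ₁ − μ₂ − μ₃ − μ₄}` where the `μᵢ` are the
decreasingly ordered square roots of the eigenvalues of `√ρ (σy⊗σy) ρ* (σy⊗σy) √ρ`
(for the decreasingly ordered values, `μ₁ − μ₂ − μ₃ − μ₄ = 2 max μᵢ − ∑ μᵢ`). -/
noncomputable def concurrence (ρ : M4) : ℝ :=
  if hρ : ρ.PosSemidef then
    if hX : (hρ.sqrt * (YY * ρ.map (starRingEnd ℂ) * YY) * hρ.sqrt).IsHermitian then
      let μ : Fin 2 × Fin 2 → ℝ := fun p => Real.sqrt (hX.eigenvalues p)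
      max 0 (2 * (Finset.univ.sup' Finset.univ_nonempty μ) - ∑ p, μ p)
    else 0
  else 0


section Aux

noncomputable def Bv : Fin 4 → (Fin 2 × Fin 2 → ℂ) := ![PhiP, PhiM, PsiP, PsiM]

lemma sqrt2_sq : ((Real.sqrt 2 : ℝ) : ℂ) ^ 2 = 2 := by
  rw [← Complex.ofReal_pow, Real.sq_sqrt (by norm_num : (0:ℝ) ≤ 2)]
  norm_num

lemma ortho : ∀ i j : Fin 4, star (Bv i) ⬝ᵥ Bv j = if i = j then 1 else 0 := by
  intro i j
  fin_cases i <;> fin_cases j <;>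
    simp [Bv, PhiP, PhiM, PsiP, PsiM, ket, dotProduct, Fintype.sum_prod_type, Fin.sum_univ_two,
      Complex.conj_ofReal, mul_add, mul_sub, Prod.ext_iff] <;>
    ring_nf <;>
    simp [Complex.conj_ofReal, sqrt2_sq] <;> ring_nf <;> simp [sqrt2_sq] <;> norm_num

lemma bv_real : ∀ i, star (Bv i) = Bv i := by
  intro i
  fin_cases i <;> funext p <;>
    simp [Bv, PhiP, PhiM, PsiP, PsiM, ket, apply_ite (starRingEnd ℂ), Complex.conj_ofReal]

lemma complete : ∑ i : Fin 4, proj (Bv i) = 1 := by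
  ext p q
  fin_cases p <;> fin_cases q <;>
    simp [Bv, proj, PhiP, PhiM, PsiP, PsiM, ket, Fin.sum_univ_four, vecMulVec_apply,
      Complex.conj_ofReal, Prod.ext_iff, Matrix.one_apply] <;>
    ring_nf <;> simp [sqrt2_sq] <;> ring_nf <;> simp [sqrt2_sq] <;> norm_num

lemma proj_mul_proj (v w : Fin 2 × Fin 2 → ℂ) :
    proj v * proj w = (star v ⬝ᵥ w) • Matrix.vecMulVec v (star w) := by
  ext p q
  simp only [proj, Matrix.mul_apply, Matrix.vecMulVec_apply, Matrix.smul_apply, dotProduct,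
    smul_eq_mul, Finset.sum_mul, Pi.star_apply, RCLike.star_def]
  rw [← Finset.sum_mul]
  rw [Finset.sum_congr rfl (fun k _ => by ring : ∀ k ∈ Finset.univ,
    v p * (starRingEnd ℂ) (v k) * (w k * (starRingEnd ℂ) (w q))
      = (starRingEnd ℂ) (v k) * w k * (v p * (starRingEnd ℂ) (w q)))]
  rw [← Finset.sum_mul]

lemma Pi_mul_Pj (i j : Fin 4) :
    proj (Bv i) * proj (Bv j) = if i = j then proj (Bv i) else 0 := by
  rw [proj_mul_proj, ortho]
  split_ifs with h
  · subst h; simp [proj]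
  · simp

lemma trace_proj (i : Fin 4) : (proj (Bv i)).trace = 1 := by
  have h := ortho i i
  rw [if_pos rfl] at h
  rw [← h]
  simp only [Matrix.trace, Matrix.diag, proj, Matrix.vecMulVec_apply, dotProduct, Pi.star_apply]
  exact Finset.sum_congr rfl fun p _ => mul_comm _ _

noncomputable def Sm (c : Fin 4 → ℝ) : M4 := ∑ i, (c i : ℂ) • proj (Bv i)

lemma Sm_mul (c d : Fin 4 → ℝ) : Sm c * Sm d = Sm (c * d) := by
  simp only [Sm, Finset.sum_mul, Finset.mul_sum, Matrix.smul_mul, Matrix.mul_smul, Pi_mul_Pj,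
    smul_ite, smul_zero]
  rw [Finset.sum_comm]
  refine Finset.sum_congr rfl fun i _ => ?_
  rw [Finset.sum_ite_eq Finset.univ i]
  simp [smul_smul, mul_comm, Complex.ofReal_mul]
  norm_cast

lemma Sm_one : Sm 1 = 1 := by
  simp [Sm, complete]

lemma Sm_trace (c : Fin 4 → ℝ) : (Sm c).trace = ((∑ i, c i : ℝ) : ℂ) := by
  simp [Sm, Matrix.trace_sum, Matrix.trace_smul, trace_proj, smul_eq_mul]

lemma Sm_mul_proj (c : Fin 4 → ℝ) (j : Fin 4) :
    Sm c * proj (Bv j) = (c j : ℂ) • proj (Bv j) := by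
  simp only [Sm, Finset.sum_mul, Matrix.smul_mul, Pi_mul_Pj, smul_ite, smul_zero]
  rw [Finset.sum_ite_eq' Finset.univ j]
  simp

lemma proj_map_conj (i : Fin 4) : (proj (Bv i)).map (starRingEnd ℂ) = proj (Bv i) := by
  have hb := bv_real i
  ext p q
  have h1 : (starRingEnd ℂ) (Bv i p) = Bv i p := congrFun hb p
  have h2 : (starRingEnd ℂ) (Bv i q) = Bv i q := congrFun hb q
  simp [proj, Matrix.map_apply, Matrix.vecMulVec_apply, h1, h2]

lemma Sm_map_conj (c : Fin 4 → ℝ) : (Sm c).map (starRingEnd ℂ) = Sm c := by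
  ext p q
  have h : ∀ i : Fin 4, (starRingEnd ℂ) (proj (Bv i) p q) = proj (Bv i) p q := fun i =>
    congrFun (congrFun (proj_map_conj i) p) q
  simp [Sm, Matrix.map_apply, Matrix.sum_apply, Matrix.smul_apply, h, Complex.conj_ofReal]

lemma proj_isHermitian (v : Fin 2 × Fin 2 → ℂ) : (proj v).IsHermitian := by
  ext p q
  simp [Matrix.conjTranspose_apply, proj, Matrix.vecMulVec_apply, mul_comm]

lemma Sm_isHermitian (c : Fin 4 → ℝ) : (Sm c).IsHermitian := by
  show (Sm c)ᴴ = Sm c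
  rw [Sm, Matrix.conjTranspose_sum]
  refine Finset.sum_congr rfl fun i _ => ?_
  rw [Matrix.conjTranspose_smul, proj_isHermitian (Bv i)]
  simp [Complex.conj_ofReal]

lemma proj_quad (v x : Fin 2 × Fin 2 → ℂ) :
    star x ⬝ᵥ (proj v *ᵥ x) = ((Complex.normSq (star v ⬝ᵥ x) : ℝ) : ℂ) := by
  have key : star x ⬝ᵥ (proj v *ᵥ x)
      = (starRingEnd ℂ) (star v ⬝ᵥ x) * (star v ⬝ᵥ x) := by
    simp only [proj, Matrix.mulVec, dotProduct, Matrix.vecMulVec_apply, Pi.star_apply,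
      RCLike.star_def, map_sum, Complex.conj_conj, Finset.sum_mul]
    refine Finset.sum_congr rfl fun p _ => ?_
    rw [Finset.mul_sum, Finset.mul_sum]
    refine Finset.sum_congr rfl fun q _ => ?_
    rw [_root_.map_mul, Complex.conj_conj]
    ring
  rw [key, ← Complex.normSq_eq_conj_mul_self]

lemma sum_mulVec {ι : Type*} (s : Finset ι) (M : ι → M4) (x : Fin 2 × Fin 2 → ℂ) :
    (∑ i ∈ s, M i) *ᵥ x = ∑ i ∈ s, (M i *ᵥ x) := by
  funext p
  simp [Matrix.mulVec, dotProduct, Matrix.sum_apply, Finset.sum_mul, Finset.sum_apply]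
  rw [Finset.sum_comm]

lemma dotProduct_sum' {ι : Type*} (s : Finset ι) (x : Fin 2 × Fin 2 → ℂ)
    (f : ι → (Fin 2 × Fin 2 → ℂ)) :
    x ⬝ᵥ (∑ i ∈ s, f i) = ∑ i ∈ s, x ⬝ᵥ f i := by
  simp only [dotProduct, Finset.sum_apply, Finset.mul_sum]
  rw [Finset.sum_comm]

lemma Sm_posSemidef {c : Fin 4 → ℝ} (hc : ∀ i, 0 ≤ c i) : (Sm c).PosSemidef := by
  refine Matrix.PosSemidef.of_dotProduct_mulVec_nonneg (Sm_isHermitian c) fun x => ?_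
  have key : star x ⬝ᵥ (Sm c *ᵥ x)
      = ((∑ i, c i * Complex.normSq (star (Bv i) ⬝ᵥ x) : ℝ) : ℂ) := by
    rw [Sm, sum_mulVec]
    rw [dotProduct_sum']
    push_cast
    refine Finset.sum_congr rfl fun i _ => ?_
    rw [Matrix.smul_mulVec, dotProduct_smul, proj_quad]
    simp [smul_eq_mul]
  rw [key]
  rw [Complex.zero_le_real]
  exact Finset.sum_nonneg fun i _ => mul_nonneg (hc i) (Complex.normSq_nonneg _)

lemma YY_apply (p q : Fin 2 × Fin 2) : YY p q = σy p.1 q.1 * σy p.2 q.2 := rfl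

lemma YY_transpose : YYᵀ = YY := by
  ext p q
  obtain ⟨a, b⟩ := p; obtain ⟨c, d⟩ := q
  fin_cases a <;> fin_cases b <;> fin_cases c <;> fin_cases d <;>
    simp [YY_apply, σy, Matrix.transpose_apply] <;> ring

lemma mul_vecMulVec (A : M4) (v w : Fin 2 × Fin 2 → ℂ) :
    A * Matrix.vecMulVec v w = Matrix.vecMulVec (A *ᵥ v) w := by
  ext p q
  simp [Matrix.mul_apply, Matrix.vecMulVec_apply, Matrix.mulVec, dotProduct, Finset.sum_mul,
    mul_assoc]

lemma vecMulVec_mul (v w : Fin 2 × Fin 2 → ℂ) (A : M4) :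
    Matrix.vecMulVec v w * A = Matrix.vecMulVec v (Aᵀ *ᵥ w) := by
  ext p q
  simp [Matrix.mul_apply, Matrix.vecMulVec_apply, Matrix.mulVec, dotProduct, Finset.mul_sum,
    Matrix.transpose_apply]
  exact Finset.sum_congr rfl fun k _ => by ring

lemma YY_vec : ∀ i : Fin 4, YY *ᵥ Bv i = (![-1, 1, 1, -1] i : ℂ) • Bv i := by
  intro i
  fin_cases i <;> funext p <;> obtain ⟨a, b⟩ := p <;> fin_cases a <;> fin_cases b <;>
    simp [Bv, YY_apply, σy, Matrix.mulVec, dotProduct, Fintype.sum_prod_type, Fin.sum_univ_two,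
      PhiP, PhiM, PsiP, PsiM, ket, Prod.ext_iff] <;> ring

lemma YY_proj (i : Fin 4) : YY * proj (Bv i) * YY = proj (Bv i) := by
  rw [proj, mul_vecMulVec, vecMulVec_mul, YY_transpose, bv_real i, YY_vec i]
  ext p q
  fin_cases i <;>
    simp [Matrix.vecMulVec_apply, bv_real] <;> ring_nf <;>
    rw [congrFun (bv_real _) q] <;> ring

lemma YY_Sm (c : Fin 4 → ℝ) : YY * Sm c * YY = Sm c := by
  simp only [Sm, Finset.mul_sum, Finset.sum_mul, Matrix.mul_smul, Matrix.smul_mul]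
  exact Finset.sum_congr rfl fun i _ => by rw [YY_proj]

lemma algebraMap_eq_Sm (μ : ℝ) : algebraMap ℝ M4 μ = Sm (fun _ => μ) := by
  have h1 : algebraMap ℝ M4 μ = (μ : ℂ) • (1 : M4) := by
    rw [Matrix.algebraMap_eq_diagonal]
    ext p q
    simp [Matrix.diagonal_apply, Matrix.one_apply, Pi.algebraMap_apply, Complex.coe_algebraMap,
      apply_ite ((μ : ℂ) * ·)]
  rw [h1, ← Sm_one, Sm, Sm, Finset.smul_sum]
  refine Finset.sum_congr rfl fun i _ => ?_
  simp [smul_smul]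

lemma algebra_sub (μ : ℝ) (c : Fin 4 → ℝ) :
    algebraMap ℝ M4 μ - Sm c = Sm (fun i => μ - c i) := by
  rw [algebraMap_eq_Sm, Sm, Sm, Sm, ← Finset.sum_sub_distrib]
  refine Finset.sum_congr rfl fun i _ => ?_
  rw [← sub_smul, Complex.ofReal_sub]

lemma Sm_isUnit {c : Fin 4 → ℝ} (hc : ∀ i, c i ≠ 0) : IsUnit (Sm c) := by
  have h : Sm c * Sm (fun i => (c i)⁻¹) = 1 := by
    rw [Sm_mul]
    have : (c * fun i => (c i)⁻¹) = 1 := by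
      funext i
      simp [Pi.mul_apply, mul_inv_cancel₀ (hc i)]
    rw [this, Sm_one]
  have := invertibleOfRightInverse _ _ h
  exact isUnit_of_invertible _

lemma spectrum_Sm_subset {c : Fin 4 → ℝ} {μ : ℝ} (h : μ ∈ spectrum ℝ (Sm c)) :
    ∃ i, μ = c i := by
  by_contra hn
  push_neg at hn
  apply spectrum.mem_iff.mp h
  rw [algebra_sub]
  exact Sm_isUnit fun i => sub_ne_zero.mpr (hn i)

lemma proj_ne_zero (i : Fin 4) : proj (Bv i) ≠ 0 := by
  have hs : ((Real.sqrt 2 : ℝ) : ℂ) ≠ 0 := by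
    intro h
    have := sqrt2_sq
    rw [h] at this
    norm_num at this
  fin_cases i <;> intro h <;>
    [(have := congrFun (congrFun h ((0 : Fin 2), (0 : Fin 2))) ((0 : Fin 2), (0 : Fin 2)));
     (have := congrFun (congrFun h ((0 : Fin 2), (0 : Fin 2))) ((0 : Fin 2), (0 : Fin 2)));
     (have := congrFun (congrFun h ((0 : Fin 2), (1 : Fin 2))) ((0 : Fin 2), (1 : Fin 2)));
     (have := congrFun (congrFun h ((0 : Fin 2), (1 : Fin 2))) ((0 : Fin 2), (1 : Fin 2)))] <;>
    simp [Bv, proj, Matrix.vecMulVec_apply, PhiP, PhiM, PsiP, PsiM, ket, Prod.ext_iff,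
      Complex.conj_ofReal, hs] at this

lemma mem_spectrum_Sm (c : Fin 4 → ℝ) (i : Fin 4) : c i ∈ spectrum ℝ (Sm c) := by
  rw [spectrum.mem_iff, algebra_sub]
  intro hU
  obtain ⟨u, hu⟩ := hU
  have h0 : Sm (fun j => c i - c j) * proj (Bv i) = 0 := by
    rw [Sm_mul_proj]
    simp
  have : proj (Bv i) = 0 := by
    calc proj (Bv i) = ↑u⁻¹ * (↑u * proj (Bv i)) := by
          rw [← mul_assoc, Units.inv_mul, one_mul]
      _ = 0 := by rw [hu, h0, mul_zero]
  exact proj_ne_zero i this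

open scoped MatrixOrder in
lemma psd_sqrt_eq_cfc {A : M4} (hA : A.PosSemidef) : hA.sqrt = CFC.sqrt A := by
  rw [CFC.sqrt_eq_cfc, cfc_nnreal_eq_real _ A hA.nonneg, hA.1.cfc_eq]
  simp only [Matrix.PosSemidef.sqrt, IsHermitian.cfc, Unitary.conjStarAlgAut_apply]
  unfold Real.sqrt
  congr

open scoped MatrixOrder in
lemma Matrix.PosSemidef.sqrt_mul_self {A : M4} (hA : A.PosSemidef) : hA.sqrt * hA.sqrt = A := by
  rw [psd_sqrt_eq_cfc]
  exact CFC.sqrt_mul_sqrt_self A hA.nonneg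

open scoped MatrixOrder in
lemma Matrix.PosSemidef.eq_sqrt_of_sq_eq {A B : M4} (hA : A.PosSemidef) (hB : B.PosSemidef)
    (h : A ^ 2 = B) : A = hB.sqrt := by
  rw [psd_sqrt_eq_cfc]
  exact (CFC.sqrt_unique (a := B) (b := A) (by rw [← h, pow_two]) hA.nonneg).symm

lemma sqrt_mul_mul_sqrt {A : M4} (hA : A.PosSemidef) : hA.sqrt * A * hA.sqrt = A * A := by
  have h := hA.sqrt_mul_self
  calc hA.sqrt * A * hA.sqrt
      = hA.sqrt * (hA.sqrt * hA.sqrt) * hA.sqrt := by rw [h]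
    _ = (hA.sqrt * hA.sqrt) * (hA.sqrt * hA.sqrt) := by
        simp only [mul_assoc]
    _ = A * A := by rw [h]

lemma trace_sqrt {A : M4} (hA : A.PosSemidef) :
    hA.sqrt.trace = ((∑ p, Real.sqrt (hA.1.eigenvalues p) : ℝ) : ℂ) := by
  unfold Matrix.PosSemidef.sqrt
  rw [Matrix.trace_mul_cycle]
  rw [Unitary.coe_star_mul_self]
  rw [one_mul, Matrix.trace_diagonal]
  push_cast
  rfl

end Aux

/-- The concurrence of a Bell-diagonal state with decreasingly ordered eigenvalues
`λ₁ ≥ λ₂ ≥ λ₃ ≥ λ₄ ≥ 0` equals `max {0, 2λ₁ − 1}`. -/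
theorem concurrence_bellDiag (l1 l2 l3 l4 : ℝ)
    (h12 : l2 ≤ l1) (h23 : l3 ≤ l2) (h34 : l4 ≤ l3) (h4 : 0 ≤ l4)
    (hsum : l1 + l2 + l3 + l4 = 1) :
    concurrence (BellDiag l1 l2 l3 l4) = max 0 (2 * l1 - 1) := by
  have hl3 : 0 ≤ l3 := le_trans h4 h34
  have hl2 : 0 ≤ l2 := le_trans hl3 h23
  have hl1 : 0 ≤ l1 := le_trans hl2 h12
  set lv : Fin 4 → ℝ := ![l1, l2, l3, l4] with hlv
  have hnn : ∀ i, 0 ≤ lv i := by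
    intro i; fin_cases i <;> simp [hlv] <;> linarith
  have hle : ∀ i, lv i ≤ l1 := by
    intro i; fin_cases i <;> simp [hlv] <;> linarith
  have hBD : BellDiag l1 l2 l3 l4 = Sm lv := by
    simp [BellDiag, Sm, Fin.sum_univ_four, Bv, hlv]
  have hρ : (Sm lv).PosSemidef := Sm_posSemidef hnn
  have hX2 : (Sm lv * Sm lv).PosSemidef := by
    rw [Sm_mul]; exact Sm_posSemidef fun i => mul_nonneg (hnn i) (hnn i)
  have h2 : (Sm lv * Sm lv).IsHermitian := hX2.1
  rw [hBD]
  simp only [concurrence]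
  rw [dif_pos hρ]
  have E : hρ.sqrt * (YY * (Sm lv).map (starRingEnd ℂ) * YY) * hρ.sqrt = Sm lv * Sm lv := by
    rw [Sm_map_conj, YY_Sm, sqrt_mul_mul_sqrt]
  rw [E, dif_pos h2]
  have hsum1 : ∑ p, Real.sqrt (h2.eigenvalues p) = 1 := by
    have hs : Sm lv = hX2.sqrt := Matrix.PosSemidef.eq_sqrt_of_sq_eq hρ hX2 (pow_two _)
    have ht := trace_sqrt hX2
    rw [← hs, Sm_trace] at ht
    have hc : (∑ i, lv i : ℝ) = (∑ p, Real.sqrt (hX2.1.eigenvalues p) : ℝ) := by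
      exact_mod_cast ht
    have hlsum : (∑ i, lv i : ℝ) = 1 := by
      simp [hlv, Fin.sum_univ_four]; linarith
    rw [hlsum] at hc
    exact hc.symm
  have heig : ∀ p, ∃ i, h2.eigenvalues p = lv i * lv i := by
    intro p
    have hm := h2.eigenvalues_mem_spectrum_real p
    have hss : spectrum ℝ (Sm lv * Sm lv) = spectrum ℝ (Sm (lv * lv)) := by rw [Sm_mul]
    rw [hss] at hm
    obtain ⟨i, hi⟩ := spectrum_Sm_subset hm
    exact ⟨i, hi⟩
  have htop : ∃ p, h2.eigenvalues p = l1 * l1 := by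
    have hm : l1 * l1 ∈ spectrum ℝ (Sm lv * Sm lv) := by
      rw [Sm_mul]
      have h0 := mem_spectrum_Sm (lv * lv) 0
      simpa [hlv] using h0
    rw [Matrix.IsHermitian.spectrum_real_eq_range_eigenvalues h2] at hm
    obtain ⟨p, hp⟩ := hm
    exact ⟨p, hp⟩
  have hsup : Finset.univ.sup' Finset.univ_nonempty
      (fun p => Real.sqrt (h2.eigenvalues p)) = l1 := by
    apply le_antisymm
    · apply Finset.sup'_le
      intro p _
      obtain ⟨i, hi⟩ := heig p
      rw [hi, Real.sqrt_mul_self (hnn i)]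
      exact hle i
    · obtain ⟨p, hp⟩ := htop
      have hv : Real.sqrt (h2.eigenvalues p) = l1 := by
        rw [hp, Real.sqrt_mul_self hl1]
      rw [← hv]
      exact Finset.le_sup' (fun p => Real.sqrt (h2.eigenvalues p)) (Finset.mem_univ p)
  show max 0 (2 * Finset.univ.sup' Finset.univ_nonempty
      (fun p => Real.sqrt (h2.eigenvalues p))
      - ∑ p, Real.sqrt (h2.eigenvalues p)) = max 0 (2 * l1 - 1)
  rw [hsup, hsum1]
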